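/- (Corollary to Theorem 2, iteration-complexity form.) Assume each f_i is convex, P is μ-strongly convex with minimizer w* and optimal value P*, the δ-similarity condition holds, and 0 < η ≤ min(1/(8nL), 1/(8n²δ)). Consider the RR-SARAH trajectory: w_{s+1} is the output of a SARAH epoch with step size η, permutation π_s, start point w_s and initial direction ∇P(w_s), for each s ≥ 0. Fix ε > 0 and assume P(w_0) − P* > 0. Then for every integer S ≥ (2/(η·μ·(n+1)))·max(0, log((P(w_0) − P*)/ε)), it holds that P(w_S) − P* ≤ ε. -/

import Mathlib

open InnerProductSpace Set

local notation "⟪" x ", " y "⟫" => @inner ℝ _ _ x y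

variable {F : Type*} [NormedAddCommGroup F] [InnerProductSpace ℝ F] [CompleteSpace F]

/-- First-order condition for a convex differentiable function. -/
lemma convexOn_fo {g : F → ℝ} {g' : F →L[ℝ] ℝ} (hg : ConvexOn ℝ Set.univ g) {x : F}
    (hd : HasFDerivAt g g' x) (y : F) : g' (y - x) ≤ g y - g x := by
  set φ : ℝ → ℝ := fun t => g (x + t • (y - x)) with hφ
  have hA : ConvexOn ℝ Set.univ φ := by
    have := hg.comp_affineMap (AffineMap.lineMap x y : ℝ →ᵃ[ℝ] F)
    simp only [Set.preimage_univ] at this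
    rw [show φ = g ∘ AffineMap.lineMap x y from ?_]
    · exact this
    funext t
    simp [φ, AffineMap.lineMap_apply, add_comm, vsub_eq_sub, vadd_eq_add]
  have hcurve : HasDerivAt (fun t : ℝ => x + t • (y - x)) (y - x) 0 := by
    simpa using ((hasDerivAt_id (0:ℝ)).smul_const (y - x)).const_add x
  have hφd : HasDerivAt φ (g' (y - x)) 0 := by
    have hd' : HasFDerivAt g g' ((fun t : ℝ => x + t • (y - x)) 0) := by simpa using hd
    exact hd'.comp_hasDerivAt 0 hcurve
  have := hA.le_slope_of_hasDerivAt (mem_univ (0:ℝ)) (mem_univ (1:ℝ)) one_pos hφd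
  rw [slope_def_field] at this
  simp only [φ] at this
  simpa using this

/-- First-order condition for a strongly convex differentiable function. -/
lemma strong_fo {p : F → ℝ} {m : ℝ} (hsc : StrongConvexOn Set.univ m p) {x : F} {p' : F}
    (hd : HasFDerivAt p (toDual ℝ F p') x) (y : F) :
    ⟪p', y - x⟫ + m / 2 * ‖y - x‖ ^ 2 ≤ p y - p x := by
  have hgconv : ConvexOn ℝ Set.univ fun z => p z - m / 2 * ‖z‖ ^ 2 :=
    strongConvexOn_iff_convex.mp hsc
  have hinner : HasFDerivAt (fun z : F => ⟪z, z⟫)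
      ((fderivInnerCLM ℝ ((x : F), (x : F))).comp
        ((ContinuousLinearMap.id ℝ F).prod (ContinuousLinearMap.id ℝ F))) x := by
    simpa using (hasFDerivAt_id x).inner ℝ (hasFDerivAt_id x)
  have hgd : HasFDerivAt (fun z => p z - m / 2 * ‖z‖ ^ 2)
      (toDual ℝ F p' - (m / 2) • ((fderivInnerCLM ℝ ((x : F), (x : F))).comp
        ((ContinuousLinearMap.id ℝ F).prod (ContinuousLinearMap.id ℝ F)))) x := by
    have : HasFDerivAt (fun z : F => m / 2 * ⟪z, z⟫)
        ((m / 2) • ((fderivInnerCLM ℝ ((x : F), (x : F))).comp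
          ((ContinuousLinearMap.id ℝ F).prod (ContinuousLinearMap.id ℝ F)))) x := by
      simpa [ContinuousLinearMap.smul_comp] using hinner.const_mul (m / 2)
    have h2 := hd.sub this
    apply h2.congr_of_eventuallyEq
    filter_upwards with z
    show p z - m / 2 * ‖z‖ ^ 2 = p z - m / 2 * ⟪z, z⟫
    rw [real_inner_self_eq_norm_sq]
  have key := convexOn_fo hgconv hgd y
  simp only [ContinuousLinearMap.sub_apply, ContinuousLinearMap.smul_apply,
    ContinuousLinearMap.comp_apply, ContinuousLinearMap.prod_apply,
    ContinuousLinearMap.id_apply, fderivInnerCLM_apply, toDual_apply_apply, smul_eq_mul] at key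
  have hns : ‖y - x‖ ^ 2 = ⟪y, y⟫ - ⟪x, y⟫ - ⟪y, x⟫ + ⟪x, x⟫ := by
    rw [← real_inner_self_eq_norm_sq, inner_sub_left, inner_sub_right, inner_sub_right]; ring
  have hny : ‖y‖ ^ 2 = ⟪y, y⟫ := (real_inner_self_eq_norm_sq y).symm
  have hnx : ‖x‖ ^ 2 = ⟪x, x⟫ := (real_inner_self_eq_norm_sq x).symm
  have hcomm : ⟪x, y⟫ = ⟪y, x⟫ := real_inner_comm y x
  simp only [inner_sub_left, inner_sub_right] at key ⊢
  rw [hns, hny, hnx] at *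
  linarith [key]

/-- Descent lemma: quadratic upper bound for a function with Lipschitz gradient. -/
lemma descent_lemma {p : F → ℝ} {G : F → F}
    (hG : ∀ z, HasFDerivAt p (toDual ℝ F (G z)) z) {L : ℝ} (hL : 0 ≤ L)
    (hLip : ∀ a b, ‖G a - G b‖ ≤ L * ‖a - b‖) (x y : F) :
    p y ≤ p x + ⟪G x, y - x⟫ + L / 2 * ‖y - x‖ ^ 2 := by
  set v : F := y - x with hv
  set ψ : ℝ → ℝ := fun t => p (x + t • v) - t * ⟪G x, v⟫ - L / 2 * t ^ 2 * ‖v‖ ^ 2 with hψ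
  have hder : ∀ t : ℝ, HasDerivAt ψ
      (⟪G (x + t • v), v⟫ - ⟪G x, v⟫ - L * t * ‖v‖ ^ 2) t := by
    intro t
    have hcurve : HasDerivAt (fun t : ℝ => x + t • v) v t := by
      simpa using ((hasDerivAt_id t).smul_const v).const_add x
    have h1 : HasDerivAt (fun t : ℝ => p (x + t • v)) (⟪G (x + t • v), v⟫) t := by
      have := (hG (x + t • v)).comp_hasDerivAt t hcurve
      simpa [toDual_apply_apply, Function.comp_def] using this
    have h2 : HasDerivAt (fun t : ℝ => t * ⟪G x, v⟫) (⟪G x, v⟫) t := by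
      simpa using (hasDerivAt_id t).mul_const (⟪G x, v⟫)
    have h3 : HasDerivAt (fun t : ℝ => L / 2 * t ^ 2 * ‖v‖ ^ 2) (L * t * ‖v‖ ^ 2) t := by
      have := ((hasDerivAt_pow 2 t).const_mul (L / 2)).mul_const (‖v‖ ^ 2)
      refine this.congr_deriv ?_
      rw [show (2 : ℕ) - 1 = 1 from rfl]; push_cast; ring
    exact (h1.sub h2).sub h3
  have hmono : AntitoneOn ψ (Set.Icc (0:ℝ) 1) := by
    apply antitoneOn_of_deriv_nonpos (convex_Icc 0 1)
    · exact fun t _ => ((hder t).differentiableAt).continuousAt.continuousWithinAt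
    · exact fun t _ => ((hder t).differentiableAt).differentiableWithinAt
    · intro t ht
      rw [interior_Icc] at ht
      rw [(hder t).deriv]
      have hsub : ⟪G (x + t • v), v⟫ - ⟪G x, v⟫ = ⟪G (x + t • v) - G x, v⟫ := by
        rw [inner_sub_left]
      rw [hsub]
      have h1 : ⟪G (x + t • v) - G x, v⟫ ≤ ‖G (x + t • v) - G x‖ * ‖v‖ :=
        real_inner_le_norm _ _
      have h2 : ‖G (x + t • v) - G x‖ ≤ L * ‖t • v‖ := by
        simpa using hLip (x + t • v) x
      have h3 : ‖t • v‖ = t * ‖v‖ := by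
        rw [norm_smul, Real.norm_eq_abs, abs_of_pos ht.1]
      rw [h3] at h2
      nlinarith [norm_nonneg v, mul_le_mul_of_nonneg_right h2 (norm_nonneg v)]
  have := hmono (Set.left_mem_Icc.mpr zero_le_one) (Set.right_mem_Icc.mpr zero_le_one) zero_le_one
  simp only [ψ] at this
  simp only [one_smul, zero_smul, add_zero, one_pow, one_mul, zero_mul, sub_zero,
    mul_zero, zero_pow] at this
  have hxy : x + v = y := by rw [hv]; abel
  rw [hxy] at this
  linarith

/-- Euclidean space abbreviation. -/
abbrev Esp (d : ℕ) := EuclideanSpace ℝ (Fin d)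

open scoped BigOperators

set_option maxHeartbeats 1000000 in
/-- Corollary to Theorem 2, iteration-complexity form, for RR-SARAH. -/
theorem rr_sarah_iteration_complexity
    {d n : ℕ} (hd : 1 ≤ d) (hn : 1 ≤ n)
    (f : Fin n → EuclideanSpace ℝ (Fin d) → ℝ)
    (P : EuclideanSpace ℝ (Fin d) → ℝ)
    (hP : ∀ w, P w = (1 / (n : ℝ)) * ∑ i, f i w)
    (L μ δ η : ℝ) (hL : 0 < L) (hμ : 0 < μ) (hδ : 0 < δ)
    (hdiff : ∀ i, Differentiable ℝ (f i))
    (hconv : ∀ i, ConvexOn ℝ Set.univ (f i))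
    (hLip : ∀ i w₁ w₂, ‖gradient (f i) w₁ - gradient (f i) w₂‖ ≤ L * ‖w₁ - w₂‖)
    (hsc : StrongConvexOn Set.univ μ P)
    (wstar : EuclideanSpace ℝ (Fin d)) (hmin : IsMinOn P Set.univ wstar)
    (Pstar : ℝ) (hPstar : Pstar = P wstar)
    (hsim : ∀ i w₁ w₂,
      ‖(gradient (f i) w₁ - gradient P w₁) - (gradient (f i) w₂ - gradient P w₂)‖
        ≤ (δ / 2) * ‖w₁ - w₂‖)
    (hη0 : 0 < η)
    (hη : η ≤ min (1 / (8 * n * L)) (1 / (8 * n ^ 2 * δ)))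
    -- the RR-SARAH trajectory
    (π : ℕ → Equiv.Perm (Fin n))
    (w : ℕ → EuclideanSpace ℝ (Fin d))
    (W V : ℕ → ℕ → EuclideanSpace ℝ (Fin d))
    (hW0 : ∀ s, W s 0 = w s) (hV0 : ∀ s, V s 0 = gradient P (w s))
    (hWrec : ∀ s, ∀ i : Fin n, W s ((i : ℕ) + 1) = W s i - η • V s i)
    (hVrec : ∀ s, ∀ i : Fin n, V s ((i : ℕ) + 1)
      = V s i + gradient (f (π s i)) (W s ((i : ℕ) + 1)) - gradient (f (π s i)) (W s i))
    (hwnext : ∀ s, w (s + 1) = W s n - η • V s n)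
    (ε : ℝ) (hε : 0 < ε) (h0 : 0 < P (w 0) - Pstar) :
    ∀ S : ℕ,
      (2 / (η * μ * ((n : ℝ) + 1))) * max 0 (Real.log ((P (w 0) - Pstar) / ε)) ≤ (S : ℝ) →
      P (w S) - Pstar ≤ ε := by
  -- basic numeric facts
  have hn1 : (1 : ℝ) ≤ (n : ℝ) := by exact_mod_cast hn
  have hn0 : (0 : ℝ) < (n : ℝ) := by linarith
  obtain ⟨hη1, hη2⟩ := le_min_iff.mp hη
  have hηL : η * ((8 : ℝ) * n * L) ≤ 1 := by
    rw [← le_div_iff₀ (by positivity)] at *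
    simpa [one_div] using hη1
  have hηδ : η * ((8 : ℝ) * n ^ 2 * δ) ≤ 1 := by
    rw [← le_div_iff₀ (by positivity)] at *
    simpa [one_div] using hη2
  have hnηL : (n : ℝ) * (η * L) ≤ 1 / 8 := by nlinarith
  have hηL8 : η * L ≤ 1 / 8 := by nlinarith
  have hn2ηδ : (n : ℝ) ^ 2 * (η * δ) ≤ 1 / 8 := by nlinarith
  -- gradients as Fréchet derivatives
  have hgi : ∀ (i : Fin n) (x : Esp d),
      HasFDerivAt (f i) (InnerProductSpace.toDual ℝ (Esp d) (gradient (f i) x)) x := by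
    intro i x
    exact hasGradientAt_iff_hasFDerivAt.mp ((hdiff i x).hasGradientAt)
  set GP : Esp d → Esp d := fun x => (n : ℝ)⁻¹ • ∑ i, gradient (f i) x with hGPdef
  have hGP : ∀ x : Esp d, HasFDerivAt P (InnerProductSpace.toDual ℝ (Esp d) (GP x)) x := by
    intro x
    have hsum : HasFDerivAt (fun y : Esp d => ∑ i, f i y)
        (∑ i, InnerProductSpace.toDual ℝ (Esp d) (gradient (f i) x)) x :=
      HasFDerivAt.fun_sum fun i _ => hgi i x
    have hmul := hsum.const_mul ((n : ℝ)⁻¹)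
    have hfun : P = fun y : Esp d => (n : ℝ)⁻¹ * ∑ i, f i y := by
      funext y; rw [hP y, one_div]
    rw [hfun]
    refine hmul.congr_fderiv ?_
    simp [hGPdef, map_smulₛₗ, map_sum]
  have hgradP : ∀ x : Esp d, gradient P x = GP x := by
    intro x
    exact HasGradientAt.gradient (hasGradientAt_iff_hasFDerivAt.mpr (hGP x))
  -- Lipschitz gradient of P
  have hGPlip : ∀ a b : Esp d, ‖GP a - GP b‖ ≤ L * ‖a - b‖ := by
    intro a b
    have h1 : GP a - GP b = (n : ℝ)⁻¹ • ∑ i, (gradient (f i) a - gradient (f i) b) := by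
      simp [hGPdef, ← smul_sub, Finset.sum_sub_distrib]
    rw [h1, norm_smul]
    have h2 : ‖∑ i, (gradient (f i) a - gradient (f i) b)‖
        ≤ ∑ _i : Fin n, L * ‖a - b‖ :=
      (norm_sum_le _ _).trans (Finset.sum_le_sum fun i _ => hLip i a b)
    have h3 : (∑ _i : Fin n, L * ‖a - b‖) = (n : ℝ) * (L * ‖a - b‖) := by
      simp [Finset.card_univ, mul_comm]
    rw [h3] at h2
    have : ‖((n : ℝ)⁻¹ : ℝ)‖ = (n : ℝ)⁻¹ := by
      rw [Real.norm_eq_abs, abs_of_pos (by positivity)]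
    rw [this]
    calc (n : ℝ)⁻¹ * ‖∑ i, (gradient (f i) a - gradient (f i) b)‖
        ≤ (n : ℝ)⁻¹ * ((n : ℝ) * (L * ‖a - b‖)) := by
          apply mul_le_mul_of_nonneg_left h2 (by positivity)
      _ = L * ‖a - b‖ := by field_simp
  -- first-order strong convexity
  have hfo : ∀ x y : Esp d, inner ℝ (GP x) (y - x) + μ / 2 * ‖y - x‖ ^ 2 ≤ P y - P x :=
    fun x y => strong_fo hsc (hGP x) y
  -- μ ≤ L
  have hμL : μ ≤ L := by
    set e0 : Esp d := EuclideanSpace.single (⟨0, by omega⟩ : Fin d) (1 : ℝ) with he0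
    have hne : ‖e0‖ = 1 := by simp [he0, EuclideanSpace.norm_single]
    have h1 := hfo 0 e0
    have h2 := hfo e0 0
    have h3 := hGPlip e0 0
    have h4 : inner ℝ (GP e0 - GP 0) (e0 - 0) ≤ ‖GP e0 - GP 0‖ * ‖e0 - 0‖ :=
      real_inner_le_norm _ _
    simp only [sub_zero, zero_sub, hne] at h1 h2 h3 h4
    rw [inner_sub_left] at h4
    have h5 : (inner ℝ (GP e0) (-e0) : ℝ) = -(inner ℝ (GP e0) e0 : ℝ) := by
      rw [inner_neg_right]
    rw [h5] at h2
    have hnorm : ‖(-e0 : Esp d)‖ = 1 := by rw [norm_neg, hne]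
    rw [hnorm] at h2
    simp only [one_pow, mul_one] at h1 h2 h3 h4
    linarith
  -- PL inequality
  have hPL : ∀ x : Esp d, 2 * μ * (P x - Pstar) ≤ ‖GP x‖ ^ 2 := by
    intro x
    have h1 := hfo x wstar
    have h2 : (inner ℝ (GP x) (wstar - x) : ℝ) ≥ -(‖GP x‖ * ‖wstar - x‖) := by
      have := real_inner_le_norm (GP x) (x - wstar)
      have hswap : (inner ℝ (GP x) (x - wstar) : ℝ) = -(inner ℝ (GP x) (wstar - x) : ℝ) := by
        rw [← inner_neg_right]; congr 1; abel
      rw [hswap] at this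
      have hnn : ‖x - wstar‖ = ‖wstar - x‖ := norm_sub_rev x wstar
      rw [hnn] at this
      linarith
    rw [hPstar]
    nlinarith [sq_nonneg (‖GP x‖ - μ * ‖wstar - x‖), norm_nonneg (GP x),
      norm_nonneg (wstar - x), sq_nonneg ‖wstar - x‖]
  -- per-step inequality
  set q : ℝ := 1 - η * μ with hqdef
  set c : ℝ := η / 2 * (1 - L * η) with hcdef
  have hημ8 : η * μ ≤ 1 / 8 := le_trans (by nlinarith) hηL8
  have hq0 : 0 ≤ q := by rw [hqdef]; linarith
  have hq1 : q ≤ 1 := by rw [hqdef]; nlinarith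
  have hc0 : 0 ≤ c := by rw [hcdef]; nlinarith
  have hstep : ∀ u v : Esp d, P (u - η • v) - Pstar
      ≤ q * (P u - Pstar) + η / 2 * ‖v - GP u‖ ^ 2 - c * ‖v‖ ^ 2 := by
    intro u v
    have hdesc := descent_lemma hGP (le_of_lt hL) hGPlip u (u - η • v)
    have h1 : (u - η • v) - u = -(η • v) := by abel
    rw [h1] at hdesc
    have h2 : (inner ℝ (GP u) (-(η • v)) : ℝ) = -(η * inner ℝ (GP u) v) := by
      rw [inner_neg_right, real_inner_smul_right]
    have h3 : ‖(-(η • v) : Esp d)‖ ^ 2 = η ^ 2 * ‖v‖ ^ 2 := by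
      rw [norm_neg, norm_smul, Real.norm_eq_abs, abs_of_pos hη0, mul_pow]
    rw [h2, h3] at hdesc
    have h4 : ‖v - GP u‖ ^ 2 = ‖v‖ ^ 2 - 2 * inner ℝ v (GP u) + ‖GP u‖ ^ 2 :=
      norm_sub_sq_real v (GP u)
    have h5 : (inner ℝ v (GP u) : ℝ) = inner ℝ (GP u) v := real_inner_comm (GP u) v
    rw [h5] at h4
    have h6 := hPL u
    have h7 := mul_le_mul_of_nonneg_left h6 (le_of_lt (half_pos hη0))
    rw [hqdef, hcdef]
    nlinarith [h7]
  -- the epoch contraction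
  have hepoch : ∀ s : ℕ, P (w (s + 1)) - Pstar ≤ q ^ (n + 1) * (P (w s) - Pstar) := by
    intro s
    set X : ℕ → Esp d := fun i => if i ≤ n then W s i else W s n - η • V s n with hXdef
    have hX0 : X 0 = w s := by simp [hXdef, hW0 s]
    have hXstep : ∀ i ≤ n, X (i + 1) = X i - η • V s i := by
      intro i hi
      rcases lt_or_eq_of_le hi with hlt | heq
      · have h1 : X (i + 1) = W s (i + 1) := by simp [hXdef, Nat.succ_le_of_lt hlt]
        have h2 : X i = W s i := by simp [hXdef, le_of_lt hlt]
        rw [h1, h2]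
        have := hWrec s ⟨i, hlt⟩
        simpa using this
      · subst heq
        have h1 : X (i + 1) = W s i - η • V s i := by simp [hXdef]
        have h2 : X i = W s i := by simp [hXdef]
        rw [h1, h2]
    have hXn1 : X (n + 1) = w (s + 1) := by
      rw [hwnext s]; simp [hXdef]
    -- the error sequence
    set Err : ℕ → Esp d := fun i => V s i - GP (X i) with hErrdef
    have hE0 : Err 0 = 0 := by
      simp [hErrdef, hX0, hV0 s, hgradP]
    have hEstep : ∀ i < n, ‖Err (i + 1) - Err i‖ ≤ δ / 2 * (η * ‖V s i‖) := by
      intro i hi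
      have hXi : X i = W s i := by simp [hXdef, le_of_lt hi]
      have hXi1 : X (i + 1) = W s (i + 1) := by simp [hXdef, Nat.succ_le_of_lt hi]
      have hv := hVrec s ⟨i, hi⟩
      simp only [Fin.val_mk] at hv
      have hkey : Err (i + 1) - Err i
          = (gradient (f (π s ⟨i, hi⟩)) (W s (i + 1)) - GP (W s (i + 1)))
            - (gradient (f (π s ⟨i, hi⟩)) (W s i) - GP (W s i)) := by
        simp only [hErrdef, hXi, hXi1, hv]
        abel
      rw [hkey]
      have hsim' := hsim (π s ⟨i, hi⟩) (W s (i + 1)) (W s i)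
      rw [hgradP, hgradP] at hsim'
      have hwd : W s (i + 1) - W s i = -(η • V s i) := by
        have := hWrec s ⟨i, hi⟩
        simp only [Fin.val_mk] at this
        rw [this]; abel
      have hwn : ‖W s (i + 1) - W s i‖ = η * ‖V s i‖ := by
        rw [hwd, norm_neg, norm_smul, Real.norm_eq_abs, abs_of_pos hη0]
      calc ‖(gradient (f (π s ⟨i, hi⟩)) (W s (i + 1)) - GP (W s (i + 1)))
            - (gradient (f (π s ⟨i, hi⟩)) (W s i) - GP (W s i))‖
          ≤ δ / 2 * ‖W s (i + 1) - W s i‖ := hsim'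
        _ = δ / 2 * (η * ‖V s i‖) := by rw [hwn]
    have hEbound : ∀ i ≤ n, ‖Err i‖ ≤ δ / 2 * η * ∑ j ∈ Finset.range i, ‖V s j‖ := by
      intro i
      induction i with
      | zero => intro _; simp [hE0]
      | succ k ih =>
        intro hk
        have hk' : k ≤ n := le_of_lt (Nat.lt_of_succ_le hk)
        have hkn : k < n := Nat.lt_of_succ_le hk
        have h1 : ‖Err (k + 1)‖ ≤ ‖Err k‖ + ‖Err (k + 1) - Err k‖ := by
          simpa using norm_add_le (Err k) (Err (k + 1) - Err k)
        have h2 := hEstep k hkn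
        have h3 := ih hk'
        rw [Finset.sum_range_succ]
        calc ‖Err (k + 1)‖ ≤ ‖Err k‖ + ‖Err (k + 1) - Err k‖ := h1
          _ ≤ δ / 2 * η * ∑ j ∈ Finset.range k, ‖V s j‖ + δ / 2 * (η * ‖V s k‖) := by
              exact add_le_add h3 h2
          _ = δ / 2 * η * (∑ j ∈ Finset.range k, ‖V s j‖ + ‖V s k‖) := by ring
    -- squared error bound
    set T : ℝ := ∑ i ∈ Finset.range (n + 1), ‖V s i‖ ^ 2 with hTdef
    have hT0 : 0 ≤ T := Finset.sum_nonneg fun i _ => sq_nonneg _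
    have hEsq : ∀ i ≤ n, ‖Err i‖ ^ 2 ≤ (δ / 2 * η) ^ 2 * ((n : ℝ) * T) := by
      intro i hi
      have h1 := hEbound i hi
      have h2 : ‖Err i‖ ^ 2 ≤ (δ / 2 * η * ∑ j ∈ Finset.range i, ‖V s j‖) ^ 2 := by
        apply pow_le_pow_left₀ (norm_nonneg _) h1
      have h3 : (∑ j ∈ Finset.range i, ‖V s j‖) ^ 2
          ≤ (i : ℝ) * ∑ j ∈ Finset.range i, ‖V s j‖ ^ 2 := by
        have := sq_sum_le_card_mul_sum_sq (s := Finset.range i) (f := fun j => ‖V s j‖)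
        simpa using this
      have h4 : (∑ j ∈ Finset.range i, ‖V s j‖ ^ 2) ≤ T := by
        rw [hTdef]
        apply Finset.sum_le_sum_of_subset_of_nonneg
        · exact Finset.range_subset_range.mpr (by omega)
        · intro j _ _; exact sq_nonneg _
      have h5 : (i : ℝ) ≤ (n : ℝ) := by exact_mod_cast hi
      have h6 : (i : ℝ) * ∑ j ∈ Finset.range i, ‖V s j‖ ^ 2 ≤ (n : ℝ) * T := by
        apply mul_le_mul h5 h4 (Finset.sum_nonneg fun j _ => sq_nonneg _) (by positivity)
      calc ‖Err i‖ ^ 2 ≤ (δ / 2 * η * ∑ j ∈ Finset.range i, ‖V s j‖) ^ 2 := h2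
        _ = (δ / 2 * η) ^ 2 * (∑ j ∈ Finset.range i, ‖V s j‖) ^ 2 := by ring
        _ ≤ (δ / 2 * η) ^ 2 * ((n : ℝ) * T) := by
            apply mul_le_mul_of_nonneg_left (le_trans h3 h6) (by positivity)
    -- Bernoulli bound on q^n
    have hqn : (7 : ℝ) / 8 ≤ q ^ n := by
      have hber := one_add_mul_le_pow (a := -(η * μ)) (by linarith only [hημ8]) n
      have h1 : (1 : ℝ) + -(η * μ) = q := by rw [hqdef]; ring
      rw [h1] at hber
      have h2a : (n : ℝ) * η * μ ≤ (n : ℝ) * η * L :=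
        mul_le_mul_of_nonneg_left hμL (by positivity)
      have h2 : (n : ℝ) * (η * μ) ≤ 1 / 8 := by
        have h2b : (n : ℝ) * (η * L) ≤ 1 / 8 := hnηL
        nlinarith only [h2a, h2b]
      calc (7 : ℝ) / 8 ≤ 1 + (n : ℝ) * -(η * μ) := by linarith only [h2]
        _ ≤ q ^ n := hber
    -- the A quantities and the inner induction
    set A : ℕ → ℝ := fun i => η / 2 * ‖Err i‖ ^ 2 - c * ‖V s i‖ ^ 2 with hAdef
    have hstepA : ∀ k ≤ n, P (X (k + 1)) - Pstar ≤ q * (P (X k) - Pstar) + A k := by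
      intro k hk
      rw [hXstep k hk]
      have := hstep (X k) (V s k)
      simp only [hAdef, hErrdef]
      linarith [this]
    have hind : ∀ k, k ≤ n + 1 → P (X k) - Pstar
        ≤ q ^ k * (P (w s) - Pstar) + ∑ i ∈ Finset.range k, q ^ (k - 1 - i) * A i := by
      intro k
      induction k with
      | zero => intro _; simp [hX0]
      | succ k ih =>
        intro hk
        have hk' : k ≤ n := by omega
        have h1 := hstepA k hk'
        have h2 := ih (by omega)
        have h3 := mul_le_mul_of_nonneg_left h2 hq0
        have h4 : ∑ i ∈ Finset.range (k + 1), q ^ (k + 1 - 1 - i) * A i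
            = q * ∑ i ∈ Finset.range k, q ^ (k - 1 - i) * A i + A k := by
          rw [Finset.sum_range_succ, Finset.mul_sum]
          congr 1
          · apply Finset.sum_congr rfl
            intro i hi
            have hik : i < k := Finset.mem_range.mp hi
            have he : k + 1 - 1 - i = (k - 1 - i) + 1 := by omega
            rw [he, pow_succ]
            ring
          · simp
        rw [h4]
        calc P (X (k + 1)) - Pstar ≤ q * (P (X k) - Pstar) + A k := h1
          _ ≤ q * (q ^ k * (P (w s) - Pstar)
                + ∑ i ∈ Finset.range k, q ^ (k - 1 - i) * A i) + A k := by linarith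
          _ = q ^ (k + 1) * (P (w s) - Pstar)
                + (q * ∑ i ∈ Finset.range k, q ^ (k - 1 - i) * A i + A k) := by
              rw [pow_succ]; ring
    -- nonpositivity of the accumulated error terms
    have hsum0 : ∑ i ∈ Finset.range (n + 1), q ^ (n + 1 - 1 - i) * A i ≤ 0 := by
      have step1 : ∀ i ∈ Finset.range (n + 1),
          q ^ (n + 1 - 1 - i) * A i ≤ η / 2 * ‖Err i‖ ^ 2 - q ^ n * (c * ‖V s i‖ ^ 2) := by
        intro i hi
        have hin : i ≤ n := by have := Finset.mem_range.mp hi; omega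
        have hpow1 : q ^ (n + 1 - 1 - i) ≤ 1 := pow_le_one₀ hq0 hq1
        have hpow2 : q ^ n ≤ q ^ (n + 1 - 1 - i) :=
          pow_le_pow_of_le_one hq0 hq1 (by omega)
        have hB : 0 ≤ η / 2 * ‖Err i‖ ^ 2 := by positivity
        have hC : 0 ≤ c * ‖V s i‖ ^ 2 := mul_nonneg hc0 (sq_nonneg _)
        have e1 : q ^ (n + 1 - 1 - i) * A i
            = q ^ (n + 1 - 1 - i) * (η / 2 * ‖Err i‖ ^ 2)
              - q ^ (n + 1 - 1 - i) * (c * ‖V s i‖ ^ 2) := by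
          rw [hAdef]; ring
        rw [e1]
        have e2 : q ^ (n + 1 - 1 - i) * (η / 2 * ‖Err i‖ ^ 2) ≤ η / 2 * ‖Err i‖ ^ 2 := by
          have := mul_le_mul_of_nonneg_right hpow1 hB
          linarith only [this]
        have e3 : q ^ n * (c * ‖V s i‖ ^ 2) ≤ q ^ (n + 1 - 1 - i) * (c * ‖V s i‖ ^ 2) :=
          mul_le_mul_of_nonneg_right hpow2 hC
        linarith
      have hle := Finset.sum_le_sum step1
      have hsplit : ∑ i ∈ Finset.range (n + 1),
            (η / 2 * ‖Err i‖ ^ 2 - q ^ n * (c * ‖V s i‖ ^ 2))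
          = (∑ i ∈ Finset.range (n + 1), η / 2 * ‖Err i‖ ^ 2) - q ^ n * c * T := by
        rw [Finset.sum_sub_distrib, hTdef, Finset.mul_sum]
        congr 1
        apply Finset.sum_congr rfl
        intro i _
        ring
      have hEsum : (∑ i ∈ Finset.range (n + 1), η / 2 * ‖Err i‖ ^ 2)
          ≤ ((n : ℝ) + 1) * (η / 2 * ((δ / 2 * η) ^ 2 * ((n : ℝ) * T))) := by
        have := Finset.sum_le_card_nsmul (Finset.range (n + 1))
          (fun i => η / 2 * ‖Err i‖ ^ 2) (η / 2 * ((δ / 2 * η) ^ 2 * ((n : ℝ) * T)))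
          (fun i hi => by
            have hin : i ≤ n := by have := Finset.mem_range.mp hi; omega
            exact mul_le_mul_of_nonneg_left (hEsq i hin) (by positivity))
        simpa [nsmul_eq_mul, Finset.card_range, add_comm] using this
      have hbb : (η * δ) ^ 2 * ((n : ℝ) * ((n : ℝ) + 1)) ≤ 1 / 32 := by
        have hz : 0 ≤ η * δ := by positivity
        have k0 : 0 ≤ (n : ℝ) ^ 2 * (η * δ) := by positivity
        have k1' := mul_self_le_mul_self k0 hn2ηδ
        have k1 : (n : ℝ) ^ 4 * (η * δ) ^ 2 ≤ 1 / 64 := by nlinarith only [k1']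
        have k2 : (n : ℝ) * ((n : ℝ) + 1) ≤ 2 * (n : ℝ) ^ 4 := by
          nlinarith only [hn1, sq_nonneg ((n : ℝ) - 1), sq_nonneg (n : ℝ), hn0]
        have k3 : (η * δ) ^ 2 * ((n : ℝ) * ((n : ℝ) + 1)) ≤ (η * δ) ^ 2 * (2 * (n : ℝ) ^ 4) :=
          mul_le_mul_of_nonneg_left k2 (sq_nonneg _)
        nlinarith only [k1, k3]
      have hc78 : η / 2 * (7 / 8) ≤ c := by
        rw [hcdef]
        have := mul_le_mul_of_nonneg_left hηL8 (le_of_lt (half_pos hη0))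
        nlinarith only [this, hη0]
      have hcoef : ((n : ℝ) + 1) * (η / 2 * ((δ / 2 * η) ^ 2 * ((n : ℝ) * T)))
          ≤ q ^ n * c * T := by
        have e1 : ((n : ℝ) + 1) * (η / 2 * ((δ / 2 * η) ^ 2 * ((n : ℝ) * T)))
            = η / 2 * ((η * δ) ^ 2 * ((n : ℝ) * ((n : ℝ) + 1))) / 4 * T := by ring
        have e2 : η / 2 * ((η * δ) ^ 2 * ((n : ℝ) * ((n : ℝ) + 1))) / 4 * T
            ≤ η / 2 * (1 / 32) / 4 * T := by
          apply mul_le_mul_of_nonneg_right _ hT0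
          have := mul_le_mul_of_nonneg_left hbb (by positivity : (0:ℝ) ≤ η / 8)
          linarith only [this]
        have e3 : η / 2 * (1 / 32) / 4 * T ≤ q ^ n * c * T := by
          have b1 : (7 : ℝ) / 8 * (η / 2 * (7 / 8)) ≤ q ^ n * c := by
            have := mul_le_mul hqn hc78 (by positivity) (le_trans (by norm_num) hqn)
            linarith only [this]
          have b2 := mul_le_mul_of_nonneg_right b1 hT0
          have b3 := mul_nonneg hη0.le hT0
          nlinarith only [b2, b3]
        rw [e1]
        exact le_trans e2 e3
      calc ∑ i ∈ Finset.range (n + 1), q ^ (n + 1 - 1 - i) * A i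
          ≤ (∑ i ∈ Finset.range (n + 1), η / 2 * ‖Err i‖ ^ 2) - q ^ n * c * T := by
            rw [← hsplit]; exact hle
        _ ≤ ((n : ℝ) + 1) * (η / 2 * ((δ / 2 * η) ^ 2 * ((n : ℝ) * T))) - q ^ n * c * T := by
            linarith
        _ ≤ 0 := by linarith
    have hfin := hind (n + 1) le_rfl
    rw [hXn1] at hfin
    linarith
  -- iterate the epoch bound
  have hiter : ∀ s : ℕ, P (w s) - Pstar ≤ q ^ ((n + 1) * s) * (P (w 0) - Pstar) := by
    intro s
    induction s with
    | zero => simp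
    | succ s ih =>
      have h1 := hepoch s
      have h2 := mul_le_mul_of_nonneg_left ih (pow_nonneg hq0 (n + 1))
      have h3 : (n + 1) * (s + 1) = (n + 1) + (n + 1) * s := by ring
      calc P (w (s + 1)) - Pstar ≤ q ^ (n + 1) * (P (w s) - Pstar) := h1
        _ ≤ q ^ (n + 1) * (q ^ ((n + 1) * s) * (P (w 0) - Pstar)) := h2
        _ = q ^ ((n + 1) * (s + 1)) * (P (w 0) - Pstar) := by
            rw [h3, pow_add]; ring
  -- conclusion
  intro S hS
  set D0 : ℝ := P (w 0) - Pstar with hD0def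
  have hD0 : 0 < D0 := h0
  have ha : 0 < η * μ * ((n : ℝ) + 1) := by positivity
  have hqexp : q ≤ Real.exp (-(η * μ)) := by
    have := Real.add_one_le_exp (-(η * μ))
    rw [hqdef]
    linarith only [this]
  have hpow : q ^ ((n + 1) * S) ≤ Real.exp (-(η * μ)) ^ ((n + 1) * S) :=
    pow_le_pow_left₀ hq0 hqexp _
  have hexp : Real.exp (-(η * μ)) ^ ((n + 1) * S)
      = Real.exp (-(η * μ) * ((((n : ℕ) : ℝ) + 1) * (S : ℝ))) := by
    rw [← Real.exp_nat_mul]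
    congr 1
    push_cast
    ring
  have hlog : Real.log (D0 / ε) ≤ η * μ * ((n : ℝ) + 1) * (S : ℝ) := by
    have hmaxlog : Real.log (D0 / ε) ≤ max 0 (Real.log (D0 / ε)) := le_max_right _ _
    have hmax0 : (0 : ℝ) ≤ max 0 (Real.log (D0 / ε)) := le_max_left _ _
    have h2 := mul_le_mul_of_nonneg_left hS
      (le_of_lt (by positivity : (0:ℝ) < η * μ * ((n : ℝ) + 1) / 2))
    have h3 : η * μ * ((n : ℝ) + 1) / 2
        * ((2 / (η * μ * ((n : ℝ) + 1))) * max 0 (Real.log (D0 / ε)))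
        = max 0 (Real.log (D0 / ε)) := by
      field_simp
    rw [h3] at h2
    have hS0 : (0 : ℝ) ≤ (S : ℝ) := Nat.cast_nonneg S
    nlinarith only [h2, hmaxlog, hmax0, hS0, ha]
  have hDε : 0 < D0 / ε := by positivity
  have h4 : Real.exp (-Real.log (D0 / ε)) = ε / D0 := by
    rw [Real.exp_neg, Real.exp_log hDε, inv_div]
  have h3 : Real.exp (-(η * μ) * ((((n : ℕ) : ℝ) + 1) * (S : ℝ)))
      ≤ Real.exp (-Real.log (D0 / ε)) := by
    apply Real.exp_le_exp.mpr
    nlinarith only [hlog]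
  have h5 : q ^ ((n + 1) * S) ≤ ε / D0 := by
    rw [hexp] at hpow
    rw [← h4]
    exact le_trans hpow h3
  have h6 := mul_le_mul_of_nonneg_right h5 (le_of_lt hD0)
  have h7 : ε / D0 * D0 = ε := by field_simp
  rw [h7] at h6
  exact le_trans (hiter S) h6
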